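/- Define 𝒦_ν(z) = 2^{ν-1} ∫₀^∞ t^{ν-1} exp(-z t - z/(4t)) dt. Then 𝒦_ν(z) ~ √(π/(2z)) e^{-z} as z → ∞, i.e., lim_{z→∞} 𝒦_ν(z) / (√(π/(2z)) e^{-z}) = 1. -/

import Mathlib

open MeasureTheory Real Set Filter

/-- Modified Bessel function of the second kind, via its integral representation. -/
noncomputable def besselK (ν z : ℝ) : ℝ :=
  2 ^ (ν - 1) * ∫ t in Set.Ioi (0:ℝ), t ^ (ν - 1) * Real.exp (-z * t - z / (4 * t))

/-- Lognormal density with parameters m (log-mean) and v (log-variance). -/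
noncomputable def lognormalPdf (m v x : ℝ) : ℝ :=
  (1 / (Real.sqrt (2 * π * v) * x)) * Real.exp (-(Real.log x - m) ^ 2 / (2 * v))

noncomputable def G (ν z s : ℝ) : ℝ :=
  Real.exp (ν * (s / Real.sqrt z) - z * (Real.cosh (s / Real.sqrt z) - 1))

lemma cosh_lb (x : ℝ) : 1 + x^2/2 ≤ Real.cosh x := by
  have hsq : ∀ y : ℝ, y^2 ≤ Real.sinh y ^ 2 := by
    intro y
    rcases le_total 0 y with hy | hy
    · have := Real.self_le_sinh_iff.2 hy
      nlinarith
    · have h2 : Real.sinh y ≤ y := by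
        have := Real.self_le_sinh_iff.2 (neg_nonneg.2 hy)
        rw [Real.sinh_neg] at this; linarith
      nlinarith
  have h : Real.cosh x = 1 + 2 * Real.sinh (x/2) ^ 2 := by
    have h1 := Real.cosh_two_mul (x/2)
    have h2 := Real.cosh_sq' (x/2)
    have h3 : (2:ℝ) * (x/2) = x := by ring
    rw [h3] at h1
    rw [h1, h2]; ring
  have := hsq (x/2)
  rw [h]; nlinarith

lemma sinh_slope : Tendsto (fun y : ℝ => Real.sinh y / y) (nhdsWithin 0 {(0:ℝ)}ᶜ) (nhds 1) := by
  have h := hasDerivAt_iff_tendsto_slope.mp (Real.hasDerivAt_sinh 0)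
  rw [Real.cosh_zero] at h
  refine h.congr (fun y => ?_)
  simp [slope_def_field, Real.sinh_zero]

lemma besselK_eq (ν z : ℝ) :
    besselK ν z = (1/2) * ∫ u : ℝ, Real.exp (ν * u - z * Real.cosh u) := by
  have himg : (fun u : ℝ => Real.exp u / 2) '' Set.univ = Set.Ioi (0:ℝ) := by
    ext t
    simp only [Set.image_univ, Set.mem_range, Set.mem_Ioi]
    constructor
    · rintro ⟨u, rfl⟩; positivity
    · intro ht; exact ⟨Real.log (2 * t), by rw [Real.exp_log (by positivity)]; ring⟩
  have hderiv : ∀ u ∈ Set.univ, HasDerivWithinAt (fun u : ℝ => Real.exp u / 2)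
      (Real.exp u / 2) Set.univ u :=
    fun u _ => ((Real.hasDerivAt_exp u).div_const 2).hasDerivWithinAt
  have hinj : Set.InjOn (fun u : ℝ => Real.exp u / 2) Set.univ := by
    intro a _ b _ h
    field_simp at h
    exact Real.exp_injective h
  have hcov := MeasureTheory.integral_image_eq_integral_abs_deriv_smul MeasurableSet.univ
    hderiv hinj (fun t => t ^ (ν - 1) * Real.exp (-z * t - z / (4 * t)))
  rw [himg] at hcov
  rw [besselK, hcov, MeasureTheory.setIntegral_univ, ← MeasureTheory.integral_const_mul,
    ← MeasureTheory.integral_const_mul]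
  refine MeasureTheory.integral_congr_ae (Filter.Eventually.of_forall fun u => ?_)
  have he : (0:ℝ) < Real.exp u / 2 := by positivity
  have h2pos : (0:ℝ) < (2:ℝ) ^ (ν - 1) := Real.rpow_pos_of_pos two_pos _
  have h1 : |Real.exp u / 2| = Real.exp u / 2 := abs_of_pos he
  have h2 : (Real.exp u / 2) ^ (ν - 1) = Real.exp ((ν-1) * u) / 2 ^ (ν - 1) := by
    rw [Real.div_rpow (Real.exp_nonneg u) (by norm_num)]
    congr 1
    rw [Real.rpow_def_of_pos (Real.exp_pos u), Real.log_exp]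
    ring_nf
  have h3 : -z * (Real.exp u / 2) - z / (4 * (Real.exp u / 2)) = -z * Real.cosh u := by
    rw [Real.cosh_eq, Real.exp_neg]
    have := Real.exp_pos u
    field_simp
    ring
  have hν : Real.exp (ν * u - z * Real.cosh u)
      = Real.exp u * Real.exp ((ν-1) * u) * Real.exp (-z * Real.cosh u) := by
    rw [← Real.exp_add, ← Real.exp_add]
    ring_nf
  simp only []
  rw [h1, smul_eq_mul, h2, h3, hν]
  field_simp

lemma G_lim (ν s : ℝ) :
    Tendsto (fun z => G ν z s) atTop (nhds (Real.exp (-(1/2) * s^2))) := by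
  have hsqrt : Tendsto Real.sqrt atTop atTop := by
    have := tendsto_rpow_atTop (by norm_num : (0:ℝ) < 1/2)
    exact this.congr' (by filter_upwards with x using (Real.sqrt_eq_rpow x).symm)
  have hA : Tendsto (fun z => ν * (s / Real.sqrt z)) atTop (nhds 0) := by
    have h0 : Tendsto (fun z => s / Real.sqrt z) atTop (nhds 0) :=
      Tendsto.div_atTop tendsto_const_nhds hsqrt
    simpa using h0.const_mul ν
  have hB : Tendsto (fun z => z * (Real.cosh (s / Real.sqrt z) - 1)) atTop
      (nhds (s^2/2)) := by
    rcases eq_or_ne s 0 with rfl | hs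
    · simp only [zero_div, Real.cosh_zero, sub_self, mul_zero]
      norm_num
    · have h1 : Tendsto (fun z : ℝ => s / (2 * Real.sqrt z)) atTop (nhds 0) :=
        Tendsto.div_atTop tendsto_const_nhds (hsqrt.const_mul_atTop two_pos)
      have h2 : ∀ᶠ z : ℝ in atTop, s / (2 * Real.sqrt z) ∈ ({(0:ℝ)}ᶜ : Set ℝ) := by
        filter_upwards [eventually_gt_atTop (0:ℝ)] with z hz
        have : Real.sqrt z > 0 := Real.sqrt_pos.2 hz
        simp only [Set.mem_compl_iff, Set.mem_singleton_iff]
        positivity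
      have h3 : Tendsto (fun z : ℝ => s / (2 * Real.sqrt z)) atTop
          (nhdsWithin 0 {(0:ℝ)}ᶜ) := tendsto_nhdsWithin_iff.2 ⟨h1, h2⟩
      have h4 : Tendsto (fun z : ℝ =>
          (s^2/2) * (Real.sinh (s / (2 * Real.sqrt z)) / (s / (2 * Real.sqrt z)))^2)
          atTop (nhds (s^2/2)) := by
        have := ((sinh_slope.comp h3).pow 2).const_mul (s^2/2)
        simpa using this
      refine h4.congr' ?_
      filter_upwards [eventually_gt_atTop (0:ℝ)] with z hz
      have hzs : Real.sqrt z > 0 := Real.sqrt_pos.2 hz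
      have hzz : Real.sqrt z ^ 2 = z := Real.sq_sqrt hz.le
      set y := s / (2 * Real.sqrt z) with hy
      have hy0 : y ≠ 0 := by positivity
      have hcosh : Real.cosh (s / Real.sqrt z) = 1 + 2 * Real.sinh y ^ 2 := by
        have h1 := Real.cosh_two_mul y
        have h2 := Real.cosh_sq' y
        have h3 : (2:ℝ) * y = s / Real.sqrt z := by
          rw [hy]; field_simp
        rw [h3] at h1
        rw [h1, h2]; ring
      have hy2 : y^2 = s^2 / (4 * z) := by
        rw [hy, div_pow, mul_pow, hzz]; norm_num
      rw [hcosh]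
      rw [div_pow]
      rw [hy2]
      field_simp
      ring
  have hC := hA.sub hB
  have hD := (Real.continuous_exp.tendsto _).comp hC
  have h5 : (0:ℝ) - s^2/2 = -(1/2)*s^2 := by ring
  rw [h5] at hD
  simpa [G, Function.comp_def] using hD

lemma G_bound (ν : ℝ) {z s : ℝ} (hz : 1 ≤ z) :
    ‖G ν z s‖ ≤ Real.exp (ν^2) * Real.exp (-(1/4) * s^2) := by
  rw [G, Real.norm_eq_abs, Real.abs_exp, ← Real.exp_add]
  apply Real.exp_le_exp.2
  have hz0 : (0:ℝ) < z := lt_of_lt_of_le one_pos hz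
  have hs1 : (1:ℝ) ≤ Real.sqrt z := by
    rw [show (1:ℝ) = Real.sqrt 1 by simp]
    exact Real.sqrt_le_sqrt hz
  have hsz : (0:ℝ) < Real.sqrt z := lt_of_lt_of_le one_pos hs1
  have h1 : ν * (s / Real.sqrt z) ≤ |ν| * |s| := by
    calc ν * (s / Real.sqrt z) ≤ |ν * (s / Real.sqrt z)| := le_abs_self _
      _ = |ν| * (|s| / Real.sqrt z) := by
          rw [abs_mul, abs_div, abs_of_pos hsz]
      _ ≤ |ν| * |s| := by
          apply mul_le_mul_of_nonneg_left _ (abs_nonneg ν)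
          exact div_le_self (abs_nonneg s) hs1
  have h2 : s^2/2 ≤ z * (Real.cosh (s / Real.sqrt z) - 1) := by
    have := cosh_lb (s / Real.sqrt z)
    have hq : (s / Real.sqrt z)^2 = s^2 / z := by
      rw [div_pow, Real.sq_sqrt hz0.le]
    rw [hq] at this
    have : s^2 / z / 2 ≤ Real.cosh (s / Real.sqrt z) - 1 := by linarith
    calc s^2/2 = z * (s^2 / z / 2) := by field_simp
      _ ≤ z * (Real.cosh (s / Real.sqrt z) - 1) :=
          mul_le_mul_of_nonneg_left this hz0.le
  nlinarith [sq_nonneg (|s|/2 - |ν|), sq_abs s, sq_abs ν]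

lemma G_tendsto (ν : ℝ) :
    Tendsto (fun z => ∫ s : ℝ, G ν z s) atTop
      (nhds (∫ s : ℝ, Real.exp (-(1/2) * s^2))) := by
  apply MeasureTheory.tendsto_integral_filter_of_dominated_convergence
    (fun s => Real.exp (ν^2) * Real.exp (-(1/4) * s^2))
  · filter_upwards with z
    apply Continuous.aestronglyMeasurable
    unfold G
    fun_prop
  · filter_upwards [eventually_ge_atTop (1:ℝ)] with z hz
    filter_upwards with s
    exact G_bound ν hz
  · exact (integrable_exp_neg_mul_sq (by norm_num : (0:ℝ) < 1/4)).const_mul _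
  · filter_upwards with s
    exact G_lim ν s

lemma ratio_eq (ν : ℝ) {z : ℝ} (hz : 0 < z) :
    besselK ν z / (Real.sqrt (π / (2 * z)) * Real.exp (-z))
      = (Real.sqrt (2 * π))⁻¹ * ∫ s : ℝ, G ν z s := by
  have hsz : (0:ℝ) < Real.sqrt z := Real.sqrt_pos.2 hz
  have hcov := MeasureTheory.Measure.integral_comp_div
    (fun u => Real.exp (ν * u - z * Real.cosh u)) (Real.sqrt z)
  have habs : |Real.sqrt z| = Real.sqrt z := abs_of_pos hsz
  rw [habs, smul_eq_mul] at hcov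
  have hI : (∫ u : ℝ, Real.exp (ν * u - z * Real.cosh u))
      = (Real.sqrt z)⁻¹ * (Real.exp (-z) * ∫ s : ℝ, G ν z s) := by
    rw [← MeasureTheory.integral_const_mul (Real.exp (-z)) (fun s => G ν z s)]
    have heq : ∀ s : ℝ, Real.exp (ν * (s / Real.sqrt z) - z * Real.cosh (s / Real.sqrt z))
        = Real.exp (-z) * G ν z s := by
      intro s
      rw [G, ← Real.exp_add]
      congr 1
      ring
    have : (∫ x : ℝ, Real.exp (ν * (x / Real.sqrt z) - z * Real.cosh (x / Real.sqrt z)))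
        = ∫ s : ℝ, Real.exp (-z) * G ν z s :=
      MeasureTheory.integral_congr_ae (Filter.Eventually.of_forall fun s => heq s)
    rw [← this, hcov]
    field_simp
  rw [besselK_eq, hI]
  have hsqrtpi : (0:ℝ) < Real.sqrt π := Real.sqrt_pos.2 Real.pi_pos
  have h2 : Real.sqrt (π / (2 * z)) = Real.sqrt π / (Real.sqrt 2 * Real.sqrt z) := by
    rw [Real.sqrt_div Real.pi_pos.le, Real.sqrt_mul (by norm_num)]
  have h3 : Real.sqrt (2 * π) = Real.sqrt 2 * Real.sqrt π := Real.sqrt_mul (by norm_num) _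
  have hs2 : (0:ℝ) < Real.sqrt 2 := by positivity
  have hexp : (0:ℝ) < Real.exp (-z) := Real.exp_pos _
  rw [h2, h3]
  have hs22 : Real.sqrt 2 ^ 2 = 2 := Real.sq_sqrt (by norm_num)
  field_simp
  linear_combination (∫ s : ℝ, G ν z s) * hs22

theorem stmt7 (ν : ℝ) :
    Filter.Tendsto (fun z => besselK ν z / (Real.sqrt (π / (2 * z)) * Real.exp (-z)))
      Filter.atTop (nhds 1) := by
  have hgauss : (∫ s : ℝ, Real.exp (-(1/2) * s^2)) = Real.sqrt (2*π) := by
    rw [integral_gaussian]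
    congr 1
    ring
  have key : Tendsto (fun z => (Real.sqrt (2*π))⁻¹ * ∫ s : ℝ, G ν z s) atTop (nhds 1) := by
    have h := (G_tendsto ν).const_mul (Real.sqrt (2*π))⁻¹
    rw [hgauss] at h
    have hne : Real.sqrt (2*π) ≠ 0 := ne_of_gt (Real.sqrt_pos.2 (by positivity))
    rwa [inv_mul_cancel₀ hne] at h
  exact key.congr' ((eventually_gt_atTop (0:ℝ)).mono fun z hz => (ratio_eq ν hz).symm)
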